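/- If n − i ≥ k, then the maximum of Σ_{j=1}^k λ_j over all achievable request vectors λ ∈ S_i(n,k) equals i + (n−i)/k; that is, every λ ∈ S_i(n,k) satisfies Σ_{j=1}^k λ_j ≤ i + (n−i)/k, and there exists λ ∈ S_i(n,k) attaining this sum with equality. -/

import Mathlib

open Matrix

/-- `R ⊆ [n]` is a recovery set for object `j` under generator matrix `G`:
the standard basis vector `e_j` lies in the span of the columns of `G` indexed by `R`,
and minimally so. -/
def IsRecoverySet {F : Type*} [Field F] {k n : ℕ} (G : Matrix (Fin k) (Fin n) F)
    (j : Fin k) (R : Finset (Fin n)) : Prop :=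
  (Pi.single j 1 : Fin k → F) ∈ Submodule.span F (Gᵀ '' (R : Set (Fin n))) ∧
    ∀ S : Finset (Fin n), S ⊂ R →
      (Pi.single j 1 : Fin k → F) ∉ Submodule.span F (Gᵀ '' (S : Set (Fin n)))

/-- A valid allocation of request rates `lam` to recovery sets: nonnegative weights
`w j R` supported on recovery sets, summing to `lam j` for each object `j`, and
loading each server `l` by at most its unit capacity. -/
def IsValidAllocation {F : Type*} [Field F] {k n : ℕ} (G : Matrix (Fin k) (Fin n) F)
    (lam : Fin k → ℝ) (w : Fin k → Finset (Fin n) → ℝ) : Prop :=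
  (∀ j R, 0 ≤ w j R) ∧
  (∀ j R, ¬ IsRecoverySet G j R → w j R = 0) ∧
  (∀ j, ∑ R : Finset (Fin n), w j R = lam j) ∧
  (∀ l : Fin n, ∑ j : Fin k, ∑ R ∈ Finset.univ.filter (fun R : Finset (Fin n) => l ∈ R),
      w j R ≤ 1)

/-- The service rate region of `G`. -/
def ServiceRegion {F : Type*} [Field F] {k n : ℕ} (G : Matrix (Fin k) (Fin n) F) :
    Set (Fin k → ℝ) :=
  {lam | (∀ j, 0 ≤ lam j) ∧ ∃ w, IsValidAllocation G lam w}

/-- `Gmat M i` = the `k × n` matrix formed by the `i` leftmost (systematic) columns of `M`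
followed by the `n - i` rightmost (parity) columns of `M`. -/
def Gmat {F : Type*} [Field F] {k n : ℕ} (M : Matrix (Fin k) (Fin (k + n)) F) (i : ℕ) :
    Matrix (Fin k) (Fin n) F :=
  Matrix.of fun r l =>
    if (l : ℕ) < i then M r ⟨(l : ℕ), by have := l.isLt; omega⟩
    else M r ⟨k + (l : ℕ), by have := l.isLt; omega⟩

section Aux

lemma card_filter_val_lt (n i : ℕ) (h : i ≤ n) :
    (Finset.univ.filter fun l : Fin n => (l : ℕ) < i).card = i := by
  have he : (Finset.univ.filter fun l : Fin n => (l : ℕ) < i)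
      = Finset.attachFin (Finset.range i)
        (fun m hm => lt_of_lt_of_le (Finset.mem_range.1 hm) h) := by
    ext x; simp [Finset.mem_attachFin]
  rw [he, Finset.card_attachFin, Finset.card_range]

lemma card_powersetCard_filter_mem {α : Type*} [DecidableEq α] (P : Finset α) (l : α)
    (hl : l ∈ P) (r : ℕ) :
    ((Finset.powersetCard (r+1) P).filter (fun R => l ∈ R)).card
      = (P.card - 1).choose r := by
  rw [← Finset.card_erase_of_mem hl, ← Finset.card_powersetCard r (P.erase l)]
  refine Finset.card_bij' (fun R _ => R.erase l) (fun S _ => insert l S) ?_ ?_ ?_ ?_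
  · intro R hR
    simp only [Finset.mem_filter, Finset.mem_powersetCard] at hR
    simp only [Finset.mem_powersetCard]
    constructor
    · exact fun x hx => Finset.mem_erase.2 ⟨(Finset.mem_erase.1 hx).1,
        hR.1.1 (Finset.mem_erase.1 hx).2⟩
    · rw [Finset.card_erase_of_mem hR.2, hR.1.2]; rfl
  · intro S hS
    simp only [Finset.mem_powersetCard] at hS
    have hlS : l ∉ S := fun h => (Finset.mem_erase.1 (hS.1 h)).1 rfl
    simp only [Finset.mem_filter, Finset.mem_powersetCard]
    refine ⟨⟨?_, ?_⟩, Finset.mem_insert_self _ _⟩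
    · intro x hx
      rcases Finset.mem_insert.1 hx with rfl | hx
      · exact hl
      · exact (Finset.mem_erase.1 (hS.1 hx)).2
    · rw [Finset.card_insert_of_notMem hlS, hS.2]
  · intro R hR
    simp only [Finset.mem_filter] at hR
    exact Finset.insert_erase hR.2
  · intro S hS
    simp only [Finset.mem_powersetCard] at hS
    exact Finset.erase_insert (fun h => (Finset.mem_erase.1 (hS.1 h)).1 rfl)

variable {F : Type*} [Field F] {k n : ℕ}

lemma mds_indep_le (M : Matrix (Fin k) (Fin (k + n)) F)
    (hMDS : ∀ S : Finset (Fin (k + n)), S.card = k →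
      LinearIndependent F (fun l : S => Mᵀ (l : Fin (k + n))))
    (S : Finset (Fin (k + n))) (hS : S.card ≤ k) :
    LinearIndependent F (fun l : S => Mᵀ (l : Fin (k + n))) := by
  obtain ⟨T, hST, hT⟩ := Finset.exists_superset_card_eq hS (by simp)
  have li := hMDS T hT
  exact li.comp (fun x : S => (⟨(x : Fin (k+n)), hST x.2⟩ : T))
    (fun a b hab => Subtype.ext (by have h := congrArg Subtype.val hab; exact h))

lemma mds_not_mem_span (M : Matrix (Fin k) (Fin (k + n)) F)
    (hMDS : ∀ S : Finset (Fin (k + n)), S.card = k →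
      LinearIndependent F (fun l : S => Mᵀ (l : Fin (k + n))))
    (S : Finset (Fin (k + n))) (hS : S.card + 1 ≤ k) (c : Fin (k + n)) (hc : c ∉ S) :
    Mᵀ c ∉ Submodule.span F (Mᵀ '' (S : Set (Fin (k + n)))) := by
  set T : Finset (Fin (k + n)) := insert c S with hT
  have hTc : T.card ≤ k := by
    rw [hT, Finset.card_insert_of_notMem hc]; omega
  have li := mds_indep_le M hMDS T hTc
  have hx : (⟨c, Finset.mem_insert_self c S⟩ : T) ∉ {x : T | (x : Fin (k + n)) ∈ S} := by
    simpa using hc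
  have h2 := li.notMem_span_image hx
  have himg : (fun l : T => Mᵀ (l : Fin (k + n))) '' {x : T | (x : Fin (k + n)) ∈ S}
      = Mᵀ '' (S : Set (Fin (k + n))) := by
    ext y
    constructor
    · rintro ⟨⟨a, haT⟩, haS, rfl⟩; exact ⟨a, haS, rfl⟩
    · rintro ⟨a, haS, rfl⟩
      exact ⟨⟨a, Finset.mem_insert_of_mem haS⟩, haS, rfl⟩
  rwa [himg] at h2

lemma mds_span_top (M : Matrix (Fin k) (Fin (k + n)) F) (hk : 0 < k)
    (hMDS : ∀ S : Finset (Fin (k + n)), S.card = k →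
      LinearIndependent F (fun l : S => Mᵀ (l : Fin (k + n))))
    (S : Finset (Fin (k + n))) (hS : S.card = k) :
    Submodule.span F (Mᵀ '' (S : Set (Fin (k + n)))) = ⊤ := by
  have li := hMDS S hS
  have hne : Nonempty S := by
    rw [Finset.nonempty_coe_sort, ← Finset.card_pos, hS]; exact hk
  have hcard : Fintype.card S = Module.finrank F (Fin k → F) := by
    rw [Fintype.card_coe, hS, Module.finrank_fintype_fun_eq_card, Fintype.card_fin]
  have htop := li.span_eq_top_of_card_eq_finrank hcard
  have hr : (Set.range fun l : S => Mᵀ (l : Fin (k + n))) = Mᵀ '' (S : Set (Fin (k + n))) := by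
    ext y
    constructor
    · rintro ⟨⟨a, ha⟩, rfl⟩; exact ⟨a, ha, rfl⟩
    · rintro ⟨a, ha, rfl⟩; exact ⟨⟨a, ha⟩, rfl⟩
  rwa [hr] at htop

section Gfacts

variable (M : Matrix (Fin k) (Fin (k + n)) F) {i : ℕ}

lemma hsys' (hsys : ∀ j : Fin k, ∀ r : Fin k, M r (Fin.castAdd n j) = if r = j then (1 : F) else 0)
    (r : Fin k) (c : Fin (k + n)) (hc : (c : ℕ) < k) :
    M r c = if (r : ℕ) = (c : ℕ) then (1 : F) else 0 := by
  have hce : c = Fin.castAdd n ⟨(c : ℕ), hc⟩ := by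
    apply Fin.ext; simp
  rw [hce, hsys]
  simp [Fin.ext_iff]

lemma Gcol_sys (hik : i ≤ k)
    (hsys : ∀ j : Fin k, ∀ r : Fin k, M r (Fin.castAdd n j) = if r = j then (1 : F) else 0)
    (l : Fin n) (hl : (l : ℕ) < i) :
    (Gmat M i)ᵀ l = (Pi.single (⟨(l : ℕ), lt_of_lt_of_le hl hik⟩ : Fin k) 1 : Fin k → F) := by
  funext r
  simp only [Gmat, Matrix.transpose_apply, Matrix.of_apply, if_pos hl]
  rw [hsys' M hsys r _ (by simpa using lt_of_lt_of_le hl hik)]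
  simp [Pi.single_apply, Fin.ext_iff]

lemma Gcol_par (l : Fin n) (hl : ¬ (l : ℕ) < i) :
    (Gmat M i)ᵀ l = Mᵀ (Fin.natAdd k l) := by
  funext r
  simp only [Gmat, Matrix.transpose_apply, Matrix.of_apply, if_neg hl]
  rfl

lemma Gimg_par (R : Finset (Fin n)) (hR : ∀ l ∈ R, i ≤ (l : ℕ)) :
    (Gmat M i)ᵀ '' (R : Set (Fin n))
      = Mᵀ '' ((R.image (Fin.natAdd k) : Finset (Fin (k + n))) : Set (Fin (k + n))) := by
  rw [Finset.coe_image]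
  ext x
  constructor
  · rintro ⟨l, hl, rfl⟩
    exact ⟨Fin.natAdd k l, ⟨l, hl, rfl⟩, (Gcol_par M l (by have := hR l hl; omega)).symm⟩
  · rintro ⟨_, ⟨l, hl, rfl⟩, rfl⟩
    exact ⟨l, hl, Gcol_par M l (by have := hR l hl; omega)⟩

lemma single_eq_col
    (hsys : ∀ j : Fin k, ∀ r : Fin k, M r (Fin.castAdd n j) = if r = j then (1 : F) else 0)
    (j : Fin k) : (Pi.single j 1 : Fin k → F) = Mᵀ (Fin.castAdd n j) := by
  funext r
  rw [Matrix.transpose_apply, hsys j r, Pi.single_apply]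

lemma recovery_singleton (hik : i ≤ k) (hkn : k ≤ n)
    (hsys : ∀ j : Fin k, ∀ r : Fin k, M r (Fin.castAdd n j) = if r = j then (1 : F) else 0)
    (j : Fin k) (hj : (j : ℕ) < i) :
    IsRecoverySet (Gmat M i) j
      {(⟨(j : ℕ), lt_of_lt_of_le j.isLt hkn⟩ : Fin n)} := by
  set l : Fin n := ⟨(j : ℕ), lt_of_lt_of_le j.isLt hkn⟩ with hldef
  have hcol : (Gmat M i)ᵀ l = (Pi.single j 1 : Fin k → F) := by
    have := Gcol_sys M hik hsys l (by simpa [hldef] using hj)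
    rwa [show (⟨((l : Fin n) : ℕ), lt_of_lt_of_le (by simpa [hldef] using hj) hik⟩ : Fin k) = j
      from Fin.ext rfl] at this
  constructor
  · rw [show ((({l} : Finset (Fin n)) : Set (Fin n))) = {l} from by simp,
      show (Gmat M i)ᵀ '' ({l} : Set (Fin n)) = {(Gmat M i)ᵀ l} from Set.image_singleton, hcol]
    exact Submodule.mem_span_singleton_self _
  · intro S hS
    rw [Finset.eq_empty_of_ssubset_singleton hS]
    simp only [Finset.coe_empty, Set.image_empty, Submodule.span_empty,
      Submodule.mem_bot]
    rw [show (Gmat M i)ᵀ '' (∅ : Set (Fin n)) = ∅ from Set.image_empty _, Submodule.span_empty,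
      Submodule.mem_bot]
    intro h
    have := congrFun h j
    simp [Pi.single_apply] at this

lemma natAdd_inj : Function.Injective (Fin.natAdd k : Fin n → Fin (k + n)) := by
  intro a b hab
  apply Fin.ext
  have := congrArg (fun x : Fin (k + n) => (x : ℕ)) hab
  simpa using this

lemma recovery_parity (hk : 0 < k)
    (hsys : ∀ j : Fin k, ∀ r : Fin k, M r (Fin.castAdd n j) = if r = j then (1 : F) else 0)
    (hMDS : ∀ S : Finset (Fin (k + n)), S.card = k →
      LinearIndependent F (fun l : S => Mᵀ (l : Fin (k + n))))
    (j : Fin k) (R : Finset (Fin n)) (hsub : ∀ l ∈ R, i ≤ (l : ℕ)) (hcard : R.card = k) :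
    IsRecoverySet (Gmat M i) j R := by
  constructor
  · rw [Gimg_par M R hsub, mds_span_top M hk hMDS _
      (by rw [Finset.card_image_of_injective _ natAdd_inj, hcard])]
    exact Submodule.mem_top
  · intro S hSR
    rw [single_eq_col M hsys, Gimg_par M S (fun l hl => hsub l (hSR.subset hl))]
    apply mds_not_mem_span M hMDS
    · rw [Finset.card_image_of_injective _ natAdd_inj]
      have := Finset.card_lt_card hSR
      omega
    · simp only [Finset.mem_image, not_exists]
      rintro x ⟨hx, hcontra⟩
      have h1 : (Fin.natAdd k x : ℕ) = k + (x : ℕ) := rfl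
      have h2 : ((Fin.castAdd n j : Fin (k + n)) : ℕ) = (j : ℕ) := rfl
      rw [Fin.ext_iff, h1, h2] at hcontra
      have := j.isLt
      omega

/-- Upper-bound structure lemma: a recovery set either contains a systematic column
or has at least `k` elements. -/
lemma recovery_structure (hik : i ≤ k)
    (hsys : ∀ j : Fin k, ∀ r : Fin k, M r (Fin.castAdd n j) = if r = j then (1 : F) else 0)
    (hMDS : ∀ S : Finset (Fin (k + n)), S.card = k →
      LinearIndependent F (fun l : S => Mᵀ (l : Fin (k + n))))
    (j : Fin k) (R : Finset (Fin n)) (hrec : IsRecoverySet (Gmat M i) j R) :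
    (∃ l ∈ R, (l : ℕ) < i) ∨ k ≤ R.card := by
  by_contra hcon
  push_neg at hcon
  obtain ⟨hall, hclt⟩ := hcon
  have hmem := hrec.1
  rw [single_eq_col M hsys, Gimg_par M R (fun l hl => hall l hl)] at hmem
  refine mds_not_mem_span M hMDS _ ?_ _ ?_ hmem
  · rw [Finset.card_image_of_injective _ natAdd_inj]; omega
  · simp only [Finset.mem_image, not_exists]
    rintro x ⟨hx, hcontra⟩
    have h1 : (Fin.natAdd k x : ℕ) = k + (x : ℕ) := rfl
    have h2 : ((Fin.castAdd n j : Fin (k + n)) : ℕ) = (j : ℕ) := rfl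
    rw [Fin.ext_iff, h1, h2] at hcontra
    have := j.isLt
    omega

end Gfacts

end Aux

theorem maximal_matching_simplex_large_n
    {F : Type*} [Field F] [Fintype F] {k n : ℕ} (hk : 2 ≤ k) (hkn : k ≤ n)
    (hq : k + n + 1 ≤ Fintype.card F)
    (M : Matrix (Fin k) (Fin (k + n)) F)
    (hsys : ∀ j : Fin k, ∀ r : Fin k, M r (Fin.castAdd n j) = if r = j then (1 : F) else 0)
    (hMDS : ∀ S : Finset (Fin (k + n)), S.card = k →
      LinearIndependent F (fun l : S => Mᵀ (l : Fin (k + n))))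
    (i : ℕ) (hik : i ≤ k) (hni : k ≤ n - i) :
    (∀ lam ∈ ServiceRegion (Gmat M i),
        ∑ j, lam j ≤ (i : ℝ) + ((n : ℝ) - (i : ℝ)) / (k : ℝ)) ∧
      ∃ lam ∈ ServiceRegion (Gmat M i),
        ∑ j, lam j = (i : ℝ) + ((n : ℝ) - (i : ℝ)) / (k : ℝ) := by
  have hin : i ≤ n := le_trans hik hkn
  have hk0 : (0:ℝ) < (k:ℝ) := by
    have : 0 < k := by omega
    exact_mod_cast this
  have hcardP : (Finset.univ.filter fun l : Fin n => ¬ (l : ℕ) < i).card = n - i := by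
    have h1 := Finset.card_filter_add_card_filter_not
      (s := (Finset.univ : Finset (Fin n))) (p := fun l : Fin n => (l : ℕ) < i)
    rw [card_filter_val_lt n i hin] at h1
    simp only [Finset.card_univ, Fintype.card_fin] at h1
    omega
  constructor
  · rintro lam ⟨hpos, w, hw0, hwrec, hwsum, hwcap⟩
    classical
    set y : Fin n → ℝ := fun l => if (l : ℕ) < i then 1 else 1 / k with hy
    have hy0 : ∀ l, 0 ≤ y l := by
      intro l; by_cases h : (l : ℕ) < i <;> simp [hy, h] <;> positivity
    have hylb : ∀ l, 1 / (k : ℝ) ≤ y l := by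
      intro l
      have h1 : 1 / (k : ℝ) ≤ 1 := by
        rw [div_le_one hk0]; exact_mod_cast (by omega : 1 ≤ k)
      by_cases h : (l : ℕ) < i <;> simp [hy, h]
      · simpa [one_div] using h1
    have hyR : ∀ (j : Fin k) (R : Finset (Fin n)), IsRecoverySet (Gmat M i) j R →
        1 ≤ ∑ l ∈ R, y l := by
      intro j R hrec
      rcases recovery_structure M hik hsys hMDS j R hrec with ⟨l, hlR, hli⟩ | hcard
      · calc (1 : ℝ) = y l := by simp [hy, hli]
          _ ≤ ∑ l ∈ R, y l := Finset.single_le_sum (fun x _ => hy0 x) hlR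
      · calc (1 : ℝ) = (k : ℝ) * (1 / k) := by field_simp
          _ ≤ (R.card : ℝ) * (1 / k) := by
              apply mul_le_mul_of_nonneg_right _ (by positivity)
              exact_mod_cast hcard
          _ = ∑ _l ∈ R, 1 / (k : ℝ) := by rw [Finset.sum_const, nsmul_eq_mul]
          _ ≤ ∑ l ∈ R, y l := Finset.sum_le_sum fun l _ => hylb l
    calc ∑ j, lam j = ∑ j, ∑ R : Finset (Fin n), w j R :=
          Finset.sum_congr rfl fun j _ => (hwsum j).symm
      _ ≤ ∑ j, ∑ R : Finset (Fin n), w j R * ∑ l ∈ R, y l := by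
          refine Finset.sum_le_sum fun j _ => Finset.sum_le_sum fun R _ => ?_
          by_cases hz : w j R = 0
          · simp [hz]
          · exact le_mul_of_one_le_right (hw0 j R)
              (hyR j R (by by_contra hnr; exact hz (hwrec j R hnr)))
      _ = ∑ j, ∑ R : Finset (Fin n), ∑ l : Fin n, (if l ∈ R then w j R * y l else 0) := by
          refine Finset.sum_congr rfl fun j _ => Finset.sum_congr rfl fun R _ => ?_
          rw [Finset.mul_sum]
          rw [show (∑ l : Fin n, if l ∈ R then w j R * y l else 0)
              = ∑ l ∈ R, w j R * y l by
            rw [Finset.sum_ite_mem, Finset.univ_inter]]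
      _ = ∑ l : Fin n, ∑ j, ∑ R : Finset (Fin n), (if l ∈ R then w j R * y l else 0) := by
          have h1 : ∀ j : Fin k, ∑ R : Finset (Fin n), ∑ l : Fin n,
              (if l ∈ R then w j R * y l else 0)
              = ∑ l : Fin n, ∑ R : Finset (Fin n), (if l ∈ R then w j R * y l else 0) :=
            fun j => Finset.sum_comm
          simp_rw [h1]
          exact Finset.sum_comm
      _ = ∑ l : Fin n, y l * ∑ j, ∑ R ∈ Finset.univ.filter
            (fun R : Finset (Fin n) => l ∈ R), w j R := by
          refine Finset.sum_congr rfl fun l _ => ?_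
          rw [Finset.mul_sum]
          refine Finset.sum_congr rfl fun j _ => ?_
          rw [Finset.mul_sum, Finset.sum_filter]
          refine Finset.sum_congr rfl fun R _ => ?_
          by_cases h : l ∈ R <;> simp [h, mul_comm]
      _ ≤ ∑ l : Fin n, y l * 1 :=
          Finset.sum_le_sum fun l _ => mul_le_mul_of_nonneg_left (hwcap l) (hy0 l)
      _ = ∑ l : Fin n, y l := by simp
      _ = (i : ℝ) + ((n : ℝ) - (i : ℝ)) / (k : ℝ) := by
          simp only [hy]
          rw [Finset.sum_ite, Finset.sum_const, Finset.sum_const,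
            card_filter_val_lt n i hin, hcardP, nsmul_eq_mul, nsmul_eq_mul,
            Nat.cast_sub hin]
          ring
  · classical
    set m : ℕ := n - i with hm
    have hm1 : k ≤ m := hni
    have hkk : 1 ≤ k := by omega
    set j0 : Fin k := ⟨0, by omega⟩ with hj0
    set P : Finset (Fin n) := Finset.univ.filter (fun l : Fin n => ¬ (l : ℕ) < i) with hP
    have hPcard : P.card = m := hcardP
    have hmemP : ∀ l : Fin n, l ∈ P ↔ ¬ (l : ℕ) < i := by
      intro l; simp [hP]
    set c : ℝ := (((m - 1).choose (k - 1) : ℕ) : ℝ) with hc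
    have hc0 : (0 : ℝ) < c := by
      have h0 : 0 < (m - 1).choose (k - 1) := Nat.choose_pos (by omega)
      rw [hc]
      exact_mod_cast h0
    set pc : Finset (Finset (Fin n)) := Finset.powersetCard k P with hpc
    have hpccard : pc.card = m.choose k := by
      rw [hpc, Finset.card_powersetCard, hPcard]
    -- the key choose identity, in ℝ
    have hchoose : (m.choose k : ℝ) * (1 / c) = (m : ℝ) / (k : ℝ) := by
      have hnat : m.choose k * k = m * ((m - 1).choose (k - 1)) := by
        have h := Nat.add_one_mul_choose_eq (m - 1) (k - 1)
        have h1 : m - 1 + 1 = m := by omega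
        have h2 : k - 1 + 1 = k := by omega
        simp only [Nat.succ_eq_add_one, h1, h2] at h
        omega
      have hr : (m.choose k : ℝ) * (k : ℝ) = (m : ℝ) * c := by
        rw [hc]; exact_mod_cast congrArg (Nat.cast : ℕ → ℝ) hnat
      field_simp
      linarith [hr]
    -- the servers for systematic singletons
    set sv : Fin k → Fin n := fun j => ⟨(j : ℕ), lt_of_lt_of_le j.isLt hkn⟩ with hsv
    set lam : Fin k → ℝ := fun j =>
      (if (j : ℕ) < i then (1 : ℝ) else 0) + (if j = j0 then (m : ℝ) / (k : ℝ) else 0)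
      with hlam
    set w : Fin k → Finset (Fin n) → ℝ := fun j R =>
      (if ((j : ℕ) < i ∧ R = {sv j}) then (1 : ℝ) else 0)
        + (if (j = j0 ∧ R ∈ pc) then 1 / c else 0) with hw
    refine ⟨lam, ⟨?_, w, ?_, ?_, ?_, ?_⟩, ?_⟩
    · -- nonneg
      intro j
      apply add_nonneg <;> split <;> positivity
    · -- w nonneg
      intro j R
      apply add_nonneg <;> split <;> positivity
    · -- support on recovery sets
      intro j R hnrec
      rw [hw]
      simp only
      rw [if_neg, if_neg, add_zero]
      · rintro ⟨rfl, hRpc⟩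
        rw [hpc, Finset.mem_powersetCard] at hRpc
        exact hnrec (recovery_parity M (by omega) hsys hMDS j0 R
          (fun l hl => by have := (hmemP l).1 (hRpc.1 hl); omega) hRpc.2)
      · rintro ⟨hji, rfl⟩
        exact hnrec (recovery_singleton M hik hkn hsys j hji)
    · -- row sums
      intro j
      rw [hw, hlam]
      simp only
      rw [Finset.sum_add_distrib]
      congr 1
      · by_cases hji : (j : ℕ) < i
        · simp only [hji, true_and, if_true]
          rw [Finset.sum_ite_eq' Finset.univ ({sv j} : Finset (Fin n)) (fun _ => (1:ℝ))]
          simp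
        · simp [hji]
      · by_cases hjj : j = j0
        · simp only [hjj, true_and, if_true]
          rw [show (∑ R : Finset (Fin n), if R ∈ pc then 1 / c else 0)
              = ∑ R ∈ pc, 1 / c by rw [Finset.sum_ite_mem, Finset.univ_inter]]
          rw [Finset.sum_const, nsmul_eq_mul, hpccard]
          exact hchoose
        · simp [hjj]
    · -- capacity
      intro l
      rw [hw]
      simp only
      rw [show (∑ j : Fin k, ∑ R ∈ Finset.univ.filter (fun R : Finset (Fin n) => l ∈ R),
            ((if ((j : ℕ) < i ∧ R = {sv j}) then (1:ℝ) else 0)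
              + (if (j = j0 ∧ R ∈ pc) then 1 / c else 0)))
          = (∑ j : Fin k, ∑ R ∈ Finset.univ.filter (fun R : Finset (Fin n) => l ∈ R),
              (if ((j : ℕ) < i ∧ R = {sv j}) then (1:ℝ) else 0))
            + (∑ j : Fin k, ∑ R ∈ Finset.univ.filter (fun R : Finset (Fin n) => l ∈ R),
              (if (j = j0 ∧ R ∈ pc) then 1 / c else 0)) by
        rw [← Finset.sum_add_distrib]
        exact Finset.sum_congr rfl fun j _ => by rw [← Finset.sum_add_distrib]]
      have hpart1 : (∑ j : Fin k, ∑ R ∈ Finset.univ.filter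
            (fun R : Finset (Fin n) => l ∈ R),
            (if ((j : ℕ) < i ∧ R = {sv j}) then (1:ℝ) else 0))
          = if (l : ℕ) < i then 1 else 0 := by
        have hinner : ∀ j : Fin k, (∑ R ∈ Finset.univ.filter
              (fun R : Finset (Fin n) => l ∈ R),
              (if ((j : ℕ) < i ∧ R = {sv j}) then (1:ℝ) else 0))
            = if ((j : ℕ) < i ∧ l = sv j) then 1 else 0 := by
          intro j
          rw [Finset.sum_filter]
          by_cases hcond : (j : ℕ) < i ∧ l = sv j
          · rw [if_pos hcond]
            have : ∀ R : Finset (Fin n),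
                (if l ∈ R then (if ((j : ℕ) < i ∧ R = {sv j}) then (1:ℝ) else 0) else 0)
                = if R = {sv j} then (1:ℝ) else 0 := by
              intro R
              by_cases hR : R = {sv j}
              · simp [hR, hcond.1, hcond.2]
              · simp [hR]
            rw [Finset.sum_congr rfl fun R _ => this R]
            rw [Finset.sum_ite_eq' Finset.univ ({sv j} : Finset (Fin n)) (fun _ => (1:ℝ))]
            simp
          · rw [if_neg hcond]
            apply Finset.sum_eq_zero
            intro R _
            by_cases hlR : l ∈ R
            · rw [if_pos hlR, if_neg]
              rintro ⟨hji, rfl⟩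
              exact hcond ⟨hji, by simpa using hlR⟩
            · rw [if_neg hlR]
        rw [Finset.sum_congr rfl fun j _ => hinner j]
        by_cases hl : (l : ℕ) < i
        · rw [if_pos hl]
          have hjl : ∀ j : Fin k, ((j : ℕ) < i ∧ l = sv j) ↔ j = ⟨(l : ℕ), by omega⟩ := by
            intro j
            constructor
            · rintro ⟨hji, rfl⟩
              apply Fin.ext
              rfl
            · rintro rfl
              exact ⟨hl, Fin.ext rfl⟩
          rw [Finset.sum_congr rfl fun j _ => by rw [if_congr (hjl j) rfl rfl]]
          rw [Finset.sum_ite_eq' Finset.univ (⟨(l : ℕ), by omega⟩ : Fin k) (fun _ => (1:ℝ))]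
          simp
        · rw [if_neg hl]
          apply Finset.sum_eq_zero
          intro j _
          rw [if_neg]
          rintro ⟨hji, rfl⟩
          exact hl hji
      have hpart2 : (∑ j : Fin k, ∑ R ∈ Finset.univ.filter
            (fun R : Finset (Fin n) => l ∈ R),
            (if (j = j0 ∧ R ∈ pc) then 1 / c else 0))
          = if l ∈ P then 1 else 0 := by
        have hinner : ∀ j : Fin k, (∑ R ∈ Finset.univ.filter
              (fun R : Finset (Fin n) => l ∈ R),
              (if (j = j0 ∧ R ∈ pc) then 1 / c else 0))
            = if j = j0 then ((pc.filter (fun R => l ∈ R)).card : ℝ) * (1 / c) else 0 := by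
          intro j
          by_cases hj : j = j0
          · rw [if_pos hj]
            have : ∀ R ∈ Finset.univ.filter (fun R : Finset (Fin n) => l ∈ R),
                (if (j = j0 ∧ R ∈ pc) then 1 / c else 0) = if R ∈ pc then 1 / c else 0 := by
              intro R _
              by_cases hR : R ∈ pc <;> simp [hR, hj]
            rw [Finset.sum_congr rfl this, ← Finset.sum_filter]
            rw [show (Finset.univ.filter (fun R : Finset (Fin n) => l ∈ R)).filter
                  (fun R => R ∈ pc) = pc.filter (fun R => l ∈ R) by
              ext R
              simp [Finset.mem_filter, and_comm]]
            rw [Finset.sum_const, nsmul_eq_mul]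
          · rw [if_neg hj]
            apply Finset.sum_eq_zero
            intro R _
            rw [if_neg]
            rintro ⟨rfl, -⟩
            exact hj rfl
        rw [Finset.sum_congr rfl fun j _ => hinner j]
        rw [Finset.sum_ite_eq' Finset.univ j0
          (fun _ => ((pc.filter (fun R => l ∈ R)).card : ℝ) * (1 / c))]
        simp only [Finset.mem_univ, if_true]
        by_cases hlP : l ∈ P
        · rw [if_pos hlP]
          have hcnt := card_powersetCard_filter_mem P l hlP (k - 1)
          rw [show k - 1 + 1 = k from by omega] at hcnt
          rw [hpc, hcnt, hPcard]
          rw [← hc]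
          field_simp
        · rw [if_neg hlP]
          have : pc.filter (fun R => l ∈ R) = ∅ := by
            apply Finset.filter_false_of_mem
            intro R hR
            rw [hpc, Finset.mem_powersetCard] at hR
            exact fun hlR => hlP (hR.1 hlR)
          rw [this]
          simp
      rw [hpart1, hpart2]
      have hlp : l ∈ P ↔ ¬ (l : ℕ) < i := hmemP l
      by_cases hl : (l : ℕ) < i
      · rw [if_pos hl, if_neg (fun h => (hlp.1 h) hl)]
        norm_num
      · rw [if_neg hl, if_pos (hlp.2 hl)]
        norm_num
    · -- total sum
      rw [hlam]
      simp only
      rw [Finset.sum_add_distrib]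
      have h1 : (∑ j : Fin k, if (j : ℕ) < i then (1:ℝ) else 0) = (i : ℝ) := by
        rw [← Finset.sum_filter, Finset.sum_const, nsmul_eq_mul,
          card_filter_val_lt k i hik, mul_one]
      have h2 : (∑ j : Fin k, if j = j0 then (m : ℝ) / (k : ℝ) else 0)
          = (m : ℝ) / (k : ℝ) := by
        rw [Finset.sum_ite_eq' Finset.univ j0 (fun _ => (m : ℝ) / (k : ℝ))]
        simp
      rw [h1, h2, hm, Nat.cast_sub hin]
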